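/- For the fully group-similarity corrupted affinity matrix W̃ in which every pair of distinct blocks i ≠ j has similarity w̃_{i,j} = w̃_{j,i}, the corrupted vector ṽ is the piece-wise linear function given by ṽ_m = Σ_{k=1}^{i−1} N_k w̃_{k,i} + (m − ℓ_i) w_i for every i = 1, …, K and every index m with ℓ_i ≤ m ≤ u_i. -/

import Mathlib

lemma interval_filter_card_aux {N a b : ℕ} (hb : b ≤ N) :
    (Finset.univ.filter fun p : Fin N => a ≤ p.val ∧ p.val < b).card = b - a := by
  rw [show (Finset.univ.filter fun p : Fin N => a ≤ p.val ∧ p.val < b)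
      = (Finset.Ico a b).attachFin (fun m hm => lt_of_lt_of_le (Finset.mem_Ico.1 hm).2 hb) by
    ext p; simp [Finset.mem_attachFin, Finset.mem_Ico]]
  rw [Finset.card_attachFin, Nat.card_Ico]

/-- For the fully group-similarity corrupted affinity matrix `W̃` in which
every pair of distinct blocks `i ≠ j` has similarity `w̃ i j = w̃ j i`, the corrupted vector
`ṽ` is the piece-wise linear function given (in 0-based indexing) by
`ṽ m = ∑_{k < i} n k * w̃ k i + (m − ℓ i) * w i` for every block `i` and every index `m`
in block `i`, where `ℓ i = ∑_{k < i} n k`. -/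
theorem fullGroupSim_vector_v_piecewise_linear
    (K : ℕ) (hK : 1 ≤ K)
    (n : Fin K → ℕ) (hn : ∀ i, 2 ≤ n i)
    (w : Fin K → ℝ) (hw : ∀ i, 0 < w i)
    (N : ℕ) (hN : N = ∑ i, n i)
    (β : Fin N → Fin K)
    (hβ : ∀ m : Fin N,
      (∑ k ∈ Finset.univ.filter (fun k => k < β m), n k) ≤ m.val ∧
      m.val < (∑ k ∈ Finset.univ.filter (fun k => k < β m), n k) + n (β m))
    (W : Matrix (Fin N) (Fin N) ℝ)
    (hW : ∀ m p, W m p = if m ≠ p ∧ β m = β p then w (β m) else 0)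
    (wt : Fin K → Fin K → ℝ)
    (hwtsymm : ∀ i j, wt i j = wt j i)
    (hwtpos : ∀ i j, i ≠ j → 0 < wt i j)
    (Wt : Matrix (Fin N) (Fin N) ℝ)
    (hWt : ∀ m p, Wt m p = if β m = β p then W m p else wt (β m) (β p))
    (Dt : Matrix (Fin N) (Fin N) ℝ)
    (hDt : Dt = Matrix.diagonal (fun m => ∑ p, Wt m p))
    (Lt : Matrix (Fin N) (Fin N) ℝ)
    (hLt : Lt = Dt - Wt)
    (vt : Fin N → ℝ)
    (hvt : ∀ m : Fin N, vt m = ∑ p ∈ Finset.univ.filter (fun p => m ≤ p), Lt m p) :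
    ∀ m : Fin N,
      vt m =
        (∑ k ∈ Finset.univ.filter (fun k => k < β m), (n k : ℝ) * wt k (β m)) +
          ((m.val : ℝ) -
              ((∑ k ∈ Finset.univ.filter (fun k => k < β m), n k : ℕ) : ℝ)) * w (β m) := by
  intro m
  set L : Fin K → ℕ := fun j => ∑ k ∈ Finset.univ.filter (fun k => k < j), n k with hLdef
  have hLmono : ∀ j j' : Fin K, j < j' → L j + n j ≤ L j' := by
    intro j j' hjj'
    have hnot : j ∉ Finset.univ.filter fun k : Fin K => k < j := by simp
    have hsub : insert j (Finset.univ.filter fun k : Fin K => k < j)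
        ⊆ Finset.univ.filter fun k : Fin K => k < j' := by
      intro k hk
      rcases Finset.mem_insert.1 hk with rfl | hk
      · simp [hjj']
      · simp only [Finset.mem_filter, Finset.mem_univ, true_and] at hk ⊢
        exact hk.trans hjj'
    have := Finset.sum_le_sum_of_subset (f := n) hsub
    rw [Finset.sum_insert hnot] at this
    simpa [hLdef, Nat.add_comm] using this
  have hLN : ∀ j : Fin K, L j + n j ≤ N := by
    intro j
    have hnot : j ∉ Finset.univ.filter fun k : Fin K => k < j := by simp
    have hsub : insert j (Finset.univ.filter fun k : Fin K => k < j)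
        ⊆ (Finset.univ : Finset (Fin K)) := Finset.subset_univ _
    have := Finset.sum_le_sum_of_subset (f := n) hsub
    rw [Finset.sum_insert hnot] at this
    rw [hN]
    simpa [hLdef, Nat.add_comm] using this
  have hβ' : ∀ p : Fin N, L (β p) ≤ p.val ∧ p.val < L (β p) + n (β p) := fun p => hβ p
  have hchar : ∀ (p : Fin N) (j : Fin K), β p = j ↔ L j ≤ p.val ∧ p.val < L j + n j := by
    intro p j
    constructor
    · rintro rfl; exact hβ' p
    · intro h
      rcases lt_trichotomy (β p) j with hlt | heq | hgt
      · have h1 := hLmono _ _ hlt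
        have h2 := (hβ' p).2
        omega
      · exact heq
      · have h1 := hLmono _ _ hgt
        have h2 := (hβ' p).1
        omega
  have hm : L (β m) ≤ m.val ∧ m.val < L (β m) + n (β m) := hβ' m
  set i := β m with hi
  -- Step 1: vt m = sum of Wt m p over p < m
  have step1 : vt m = ∑ p ∈ Finset.univ.filter (fun p => p < m), Wt m p := by
    rw [hvt]
    have hsplit := Finset.sum_filter_add_sum_filter_not (Finset.univ : Finset (Fin N))
      (fun p => m ≤ p) (fun p => Wt m p)
    have hD : ∑ p ∈ Finset.univ.filter (fun p => m ≤ p), Dt m p = ∑ p, Wt m p := by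
      rw [hDt]
      have : ∀ p : Fin N, Matrix.diagonal (fun q => ∑ r, Wt q r) m p
          = if m = p then (∑ r, Wt m r) else 0 := by
        intro p; rw [Matrix.diagonal_apply]
      rw [Finset.sum_congr rfl fun p _ => this p, Finset.sum_ite_eq]
      simp
    have hfneq : (Finset.univ.filter fun p : Fin N => ¬ m ≤ p)
        = Finset.univ.filter fun p : Fin N => p < m := by
      ext p; simp [not_le]
    calc ∑ p ∈ Finset.univ.filter (fun p => m ≤ p), Lt m p
        = ∑ p ∈ Finset.univ.filter (fun p => m ≤ p), (Dt m p - Wt m p) := by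
          apply Finset.sum_congr rfl; intro p _; rw [hLt]; rfl
      _ = (∑ p ∈ Finset.univ.filter (fun p => m ≤ p), Dt m p)
            - ∑ p ∈ Finset.univ.filter (fun p => m ≤ p), Wt m p := Finset.sum_sub_distrib _ _
      _ = (∑ p, Wt m p) - ∑ p ∈ Finset.univ.filter (fun p => m ≤ p), Wt m p := by rw [hD]
      _ = ∑ p ∈ Finset.univ.filter (fun p => ¬ m ≤ p), Wt m p := by
          rw [← hsplit]; ring
      _ = _ := by rw [hfneq]
  -- Step 2: fiberwise decomposition
  have step2 : ∑ p ∈ Finset.univ.filter (fun p => p < m), Wt m p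
      = ∑ j : Fin K, ∑ p ∈ (Finset.univ.filter (fun p => p < m)).filter (fun p => β p = j),
          Wt m p :=
    (Finset.sum_fiberwise _ _ _).symm
  -- fiber values
  have fiber : ∀ j : Fin K,
      (∑ p ∈ (Finset.univ.filter (fun p : Fin N => p < m)).filter (fun p => β p = j), Wt m p)
      = if j < i then (n j : ℝ) * wt j i
        else if j = i then ((m.val : ℝ) - (L i : ℝ)) * w i else 0 := by
    intro j
    rcases lt_trichotomy j i with hj | hj | hj
    · -- full block j
      have hset : (Finset.univ.filter (fun p : Fin N => p < m)).filter (fun p => β p = j)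
          = Finset.univ.filter fun p : Fin N => L j ≤ p.val ∧ p.val < L j + n j := by
        ext p
        simp only [Finset.mem_filter, Finset.mem_univ, true_and]
        constructor
        · rintro ⟨_, hp⟩; exact (hchar p j).1 hp
        · intro hp
          refine ⟨?_, (hchar p j).2 hp⟩
          have := hLmono j i hj
          have := hm.1
          rw [Fin.lt_def]; omega
      have hval : ∀ p ∈ Finset.univ.filter
          fun p : Fin N => L j ≤ p.val ∧ p.val < L j + n j, Wt m p = wt j i := by
        intro p hp
        simp only [Finset.mem_filter, Finset.mem_univ, true_and] at hp
        have hbp : β p = j := (hchar p j).2 hp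
        rw [hWt, hbp, ← hi, if_neg (by exact fun h => absurd h.symm (ne_of_lt hj)), hwtsymm]
      rw [hset, Finset.sum_congr rfl hval, Finset.sum_const, nsmul_eq_mul,
        interval_filter_card_aux (hLN j), if_pos hj]
      simp
    · -- j = i : partial block
      have hset : (Finset.univ.filter (fun p : Fin N => p < m)).filter (fun p => β p = j)
          = Finset.univ.filter fun p : Fin N => L j ≤ p.val ∧ p.val < m.val := by
        ext p
        simp only [Finset.mem_filter, Finset.mem_univ, true_and, Fin.lt_def]
        constructor
        · rintro ⟨h1, hp⟩; exact ⟨((hchar p j).1 hp).1, h1⟩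
        · intro hp
          refine ⟨hp.2, (hchar p j).2 ⟨hp.1, ?_⟩⟩
          have h2 := hm.2
          rw [hj]
          omega
      have hval : ∀ p ∈ Finset.univ.filter
          fun p : Fin N => L j ≤ p.val ∧ p.val < m.val, Wt m p = w j := by
        intro p hp
        simp only [Finset.mem_filter, Finset.mem_univ, true_and] at hp
        have hbp : β p = j := (hchar p j).2 ⟨hp.1, by have h2 := hm.2; rw [hj]; omega⟩
        have hne : m ≠ p := by
          intro h; rw [h] at hp; omega
        rw [hWt, hbp, hj, ← hi, if_pos rfl, hW, ← hi, if_pos ⟨hne, by rw [hbp, hj, hi]⟩]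
      have hcard := interval_filter_card_aux (N := N) (a := L j) (b := m.val) (le_of_lt m.isLt)
      rw [hset, Finset.sum_congr rfl hval, Finset.sum_const, nsmul_eq_mul, hcard,
        hj, if_neg (lt_irrefl i), if_pos rfl, Nat.cast_sub hm.1]
    · -- j > i : empty
      have hset : (Finset.univ.filter (fun p : Fin N => p < m)).filter (fun p => β p = j)
          = ∅ := by
        ext p
        simp only [Finset.mem_filter, Finset.mem_univ, true_and, Finset.notMem_empty,
          iff_false, not_and, Fin.lt_def]
        intro h1 hp
        have h2 := ((hchar p j).1 hp).1
        have h3 := hLmono i j hj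
        have h4 := hm.2
        omega
      rw [hset, Finset.sum_empty, if_neg (by exact fun h => absurd h (not_lt.2 (le_of_lt hj))),
        if_neg (ne_of_gt hj)]
  -- assemble
  rw [step1, step2, Finset.sum_congr rfl fun j _ => fiber j]
  rw [← Finset.sum_filter_add_sum_filter_not (Finset.univ : Finset (Fin K)) (fun j => j < i)]
  have h1 : ∑ j ∈ Finset.univ.filter (fun j => j < i),
      (if j < i then (n j : ℝ) * wt j i else if j = i then ((m.val : ℝ) - (L i : ℝ)) * w i else 0)
      = ∑ j ∈ Finset.univ.filter (fun j => j < i), (n j : ℝ) * wt j i := by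
    apply Finset.sum_congr rfl
    intro j hj
    simp only [Finset.mem_filter, Finset.mem_univ, true_and] at hj
    rw [if_pos hj]
  have h2 : ∑ j ∈ Finset.univ.filter (fun j => ¬ j < i),
      (if j < i then (n j : ℝ) * wt j i else if j = i then ((m.val : ℝ) - (L i : ℝ)) * w i else 0)
      = ((m.val : ℝ) - (L i : ℝ)) * w i := by
    rw [Finset.sum_congr rfl (g := fun j =>
        if j = i then ((m.val : ℝ) - (L i : ℝ)) * w i else 0)]
    · rw [Finset.sum_ite_eq', if_pos (by simp)]
    · intro j hj
      simp only [Finset.mem_filter, Finset.mem_univ, true_and] at hj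
      rw [if_neg hj]
  rw [h1, h2]
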